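/- Under the hypotheses and with the definitions below, F_2 < F_3; explicitly, (1 + G_2)/(H_2)² < (1 + G_3)/((2 + H_3))². (Lemma 5.4 of the paper.) -/

import Mathlib

set_option maxHeartbeats 1000000


/-- Lemma 5.4: with `n = 2m`, `1 < μ_k < k(n−k)/((k−1)(n+1−k))`,
`G_{m+1} = 0`, `H_{m+1} = 1`, `G_k = (1−μ_k)² + μ_k²G_{k+1}`, `H_k = 2 + μ_kH_{k+1}`,
`F_k = (1+G_k)/((2(k−2)+H_k)²)`, one has `F_2 < F_3`. -/
theorem stmt6 (m : ℕ) (hm : 2 ≤ m) (n : ℕ) (hn : n = 2 * m)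
    (μ G H F : ℕ → ℝ)
    (hμ : ∀ k, 2 ≤ k → k ≤ m → 1 < μ k ∧
      μ k < ((k : ℝ) * ((n : ℝ) - k)) / (((k : ℝ) - 1) * ((n : ℝ) + 1 - k)))
    (hGtop : G (m + 1) = 0) (hHtop : H (m + 1) = 1)
    (hG : ∀ k, 2 ≤ k → k ≤ m → G k = (1 - μ k) ^ 2 + (μ k) ^ 2 * G (k + 1))
    (hH : ∀ k, 2 ≤ k → k ≤ m → H k = 2 + μ k * H (k + 1))
    (hF : ∀ k, 2 ≤ k → k ≤ m + 1 → F k = (1 + G k) / (2 * ((k : ℝ) - 2) + H k) ^ 2) :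
    F 2 < F 3 := by
  subst hn
  have hM : (2:ℝ) ≤ (m:ℝ) := by exact_mod_cast hm
  -- Invariant S : nonnegativity of G and linear lower bound on H
  have S : ∀ i k, k + i = m + 1 → 2 ≤ k → 0 ≤ G k ∧ (2 * (i:ℝ) + 1) ≤ H k := by
    intro i
    induction i with
    | zero =>
      intro k hk _
      have hk' : k = m + 1 := by omega
      subst hk'
      refine ⟨by rw [hGtop], by rw [hHtop]; norm_num⟩
    | succ i ih =>
      intro k hk h2
      have hkm : k ≤ m := by omega
      obtain ⟨hg1, hh1⟩ := ih (k+1) (by omega) (by omega)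
      obtain ⟨hμ1, -⟩ := hμ k h2 hkm
      refine ⟨?_, ?_⟩
      · rw [hG k h2 hkm]
        nlinarith [sq_nonneg (1 - μ k), sq_nonneg (μ k), hg1]
      · rw [hH k h2 hkm]
        push_cast
        nlinarith [hh1, hμ1]
  -- Invariant T : weighted upper bound on G
  have T : ∀ i k, k + i = m + 1 → 3 ≤ k →
      (((k:ℝ) - 1) * (2*(m:ℝ) + 1 - (k:ℝ)))^2 * G k ≤ (i:ℝ) * (2*(m:ℝ) + 1 - 2*(k:ℝ))^2 := by
    intro i
    induction i with
    | zero =>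
      intro k hk _
      have hk' : k = m + 1 := by omega
      subst hk'
      rw [hGtop]
      norm_num
    | succ i ih =>
      intro k hk h3
      have h2 : 2 ≤ k := by omega
      have hkm : k ≤ m := by omega
      have hkR : (3:ℝ) ≤ (k:ℝ) := by exact_mod_cast h3
      have hkmR : (k:ℝ) ≤ (m:ℝ) := by exact_mod_cast hkm
      obtain ⟨hμ1, hμ2⟩ := hμ k h2 hkm
      push_cast at hμ2
      have hg1 : 0 ≤ G (k+1) := (S i (k+1) (by omega) (by omega)).1
      have ihk := ih (k+1) (by omega) (by omega)
      push_cast at ihk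
      have hc : 0 < ((k:ℝ) - 1) * (2*(m:ℝ) + 1 - (k:ℝ)) := by nlinarith
      have hμc : μ k * (((k:ℝ) - 1) * (2*(m:ℝ) + 1 - (k:ℝ))) < (k:ℝ) * (2*(m:ℝ) - (k:ℝ)) := by
        have h := (lt_div_iff₀ hc).mp hμ2
        linarith [h]
      rw [hG k h2 hkm]
      push_cast
      set c : ℝ := ((k:ℝ) - 1) * (2*(m:ℝ) + 1 - (k:ℝ)) with hcdef
      have hb1 : (1:ℝ) ≤ 2*(m:ℝ) + 1 - 2*(k:ℝ) := by linarith
      have h0 : 0 ≤ c * (μ k - 1) := mul_nonneg hc.le (by linarith)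
      have h1 : c * (μ k - 1) ≤ 2*(m:ℝ) + 1 - 2*(k:ℝ) := by nlinarith [hμc]
      have e1 : (c * (1 - μ k))^2 ≤ (2*(m:ℝ) + 1 - 2*(k:ℝ))^2 := by nlinarith [h0, h1]
      have h0' : 0 ≤ c * μ k := mul_nonneg hc.le (by linarith)
      have h1' : c * μ k ≤ (k:ℝ) * (2*(m:ℝ) - (k:ℝ)) := by rw [mul_comm]; exact hμc.le
      have e2 : (c * μ k)^2 * G (k+1) ≤ ((k:ℝ) * (2*(m:ℝ) - (k:ℝ)))^2 * G (k+1) := by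
        have hsq : (c * μ k)^2 ≤ ((k:ℝ) * (2*(m:ℝ) - (k:ℝ)))^2 := pow_le_pow_left₀ h0' h1' 2
        exact mul_le_mul_of_nonneg_right hsq hg1
      have e4 : (2*(m:ℝ) + 1 - 2*((k:ℝ)+1))^2 ≤ (2*(m:ℝ) + 1 - 2*(k:ℝ))^2 := by nlinarith [hb1]
      have hi : (0:ℝ) ≤ (i:ℝ) := Nat.cast_nonneg i
      have e4i := mul_le_mul_of_nonneg_left e4 hi
      have id2 : ((k:ℝ)+1-1) * (2*(m:ℝ)+1-((k:ℝ)+1)) = (k:ℝ) * (2*(m:ℝ) - (k:ℝ)) := by ring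
      rw [id2] at ihk
      rw [show c^2 * ((1 - μ k)^2 + μ k^2 * G (k+1))
          = (c*(1-μ k))^2 + (c*μ k)^2 * G (k+1) from by ring]
      linarith [e1, e2, ihk, e4i]
  -- Instantiate at k = 3
  obtain ⟨hg3, hh3⟩ := S (m - 2) 3 (by omega) (by norm_num)
  have hcast : ((m - 2 : ℕ) : ℝ) = (m:ℝ) - 2 := by
    rw [Nat.cast_sub hm]; norm_num
  rw [hcast] at hh3
  have hT3 := T (m - 2) 3 (by omega) le_rfl
  rw [hcast] at hT3
  push_cast at hT3
  -- deduce 8 * G 3 ≤ H 3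
  have hpoly : ((m:ℝ) - 2) * (2*(m:ℝ) + 1 - 2*3)^2 ≤ 2 * ((m:ℝ) - 1)^2 * (2*((m:ℝ)-2) + 1) := by
    linarith [sq_nonneg ((m:ℝ) - 7/4)]
  have hmm : (0:ℝ) < 2 * ((m:ℝ) - 1)^2 :=
    mul_pos (by norm_num) (pow_pos (by linarith : (0:ℝ) < (m:ℝ)-1) 2)
  have hstep := mul_le_mul_of_nonneg_left hh3 hmm.le
  have key : 2*((m:ℝ)-1)^2 * (8 * G 3) ≤ 2*((m:ℝ)-1)^2 * H 3 := by
    linarith [hT3, hpoly, hstep]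
  have h8 : 8 * G 3 ≤ H 3 := le_of_mul_le_mul_left key hmm
  -- bounds on μ 2
  obtain ⟨hx1, hx2⟩ := hμ 2 le_rfl hm
  push_cast at hx2
  have hden : (0:ℝ) < ((2:ℝ) - 1) * (2*(m:ℝ) + 1 - 2) := by linarith
  have hx2' : μ 2 * (((2:ℝ) - 1) * (2*(m:ℝ) + 1 - 2)) < 2 * (2*(m:ℝ) - 2) := by
    have h := (lt_div_iff₀ hden).mp hx2
    linarith [h]
  have h2m : (0:ℝ) < 2*(m:ℝ) - 1 := by linarith
  have hxlt2 : μ 2 < 2 := by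
    have hx3 : μ 2 * (2*(m:ℝ) - 1) < 2 * (2*(m:ℝ) - 1) := by
      have e : μ 2 * (((2:ℝ) - 1) * (2*(m:ℝ) + 1 - 2)) = μ 2 * (2*(m:ℝ) - 1) := by ring
      rw [e] at hx2'
      linarith [hx2']
    exact (mul_lt_mul_iff_of_pos_right h2m).mp hx3
  have hG2 := hG 2 le_rfl hm
  have hH2 := hH 2 le_rfl hm
  have hh1 : (1:ℝ) ≤ H 3 := by linarith
  -- the key quantity E
  have hE : 0 < 2 * (H 3)^2 + 4 * (H 3) * (2 - μ 2) - 4 * μ 2 * G 3 * H 3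
      - 4 * (μ 2 - 1) - 4 * (μ 2 + 1) * G 3 := by
    rcases eq_or_lt_of_le hm with hm2 | hm3
    · -- m = 2 : G 3 = 0, H 3 = 1
      have hg0 : G 3 = 0 := by rw [show 3 = m + 1 by omega]; exact hGtop
      have hH30 : H 3 = 1 := by rw [show 3 = m + 1 by omega]; exact hHtop
      have hm2' : (m:ℝ) = 2 := by exact_mod_cast hm2.symm
      rw [hm2'] at hx2'
      rw [hg0, hH30]
      -- reduces to 0 < 14 - 8 μ 2 with 3 μ 2 < 4
      linarith [hx2']
    · have hh33 : (3:ℝ) ≤ H 3 := by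
        have h3m : (3:ℝ) ≤ (m:ℝ) := by exact_mod_cast hm3
        linarith
      have t1 : 0 ≤ (H 3 - 8 * G 3) * H 3 :=
        mul_nonneg (by linarith) (by linarith)
      have t3 : 0 ≤ G 3 * H 3 * (2 - μ 2) :=
        mul_nonneg (mul_nonneg hg3 (by linarith)) (by linarith)
      have t4 : 0 ≤ (2 - μ 2) * G 3 := mul_nonneg (by linarith) hg3
      have t6 : 0 ≤ (H 3 - 3) * H 3 := mul_nonneg (by linarith) (by linarith)
      have t7 : 0 ≤ (2 - μ 2) * H 3 := mul_nonneg (by linarith) (by linarith)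
      linarith [t1, t3, t4, t6, t7, h8, hxlt2]
  have hprod : 0 < (μ 2 - 1) * (2 * (H 3)^2 + 4 * (H 3) * (2 - μ 2) - 4 * μ 2 * G 3 * H 3
      - 4 * (μ 2 - 1) - 4 * (μ 2 + 1) * G 3) := mul_pos (by linarith) hE
  have hmain : (1 + G 2) * (2 + H 3)^2 < (1 + G 3) * (2 + μ 2 * H 3)^2 := by
    rw [hG2]
    linarith [hprod]
  have hH2pos : (0:ℝ) < H 2 := by
    rw [hH2]
    have : 0 < μ 2 * H 3 := mul_pos (by linarith) (by linarith)
    linarith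
  have hH3pos : (0:ℝ) < 2 + H 3 := by linarith
  have hF2 := hF 2 (by norm_num) (by omega)
  have hF3 := hF 3 (by norm_num) (by omega)
  norm_num at hF2 hF3
  rw [hF2, hF3, div_lt_div_iff₀ (by positivity) (by positivity)]
  rw [hH2]
  linarith [hmain]
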